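/- Let P be the probability measure on ℝ with density (3/2)^n on J_n = [1 - 1/3^(n-1), 1 - 2/3^n]. Then ∫ min over a ∈ {1/12, 1/4, 13/18, 17/18} of (x - a)^2 dP = 79/44064. Consequently the 4th quantization error satisfies V₄ ≤ 79/44064. -/

import Mathlib

open MeasureTheory Set

/-- The interval `J n = [1 - 1/3^(n-1), 1 - 2/3^n]`. -/
noncomputable def J (n : ℕ) : Set ℝ := Set.Icc (1 - 1 / 3 ^ (n - 1)) (1 - 2 / 3 ^ n)

/-- The piecewise constant density: `(3/2)^n` on `J n` for `n ≥ 1`, `0` elsewhere. -/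
noncomputable def f (x : ℝ) : ℝ :=
  ∑' n : ℕ, Set.indicator (J (n + 1)) (fun _ => ((3 : ℝ) / 2) ^ (n + 1)) x

/-- The piecewise uniform probability measure on `ℝ` with density `f`. -/
noncomputable def P : Measure ℝ :=
  MeasureTheory.volume.withDensity (fun x => ENNReal.ofReal (f x))


noncomputable def g (x : ℝ) : ℝ :=
  min (min ((x - 1 / 12) ^ 2) ((x - 1 / 4) ^ 2))
    (min ((x - 13 / 18) ^ 2) ((x - 17 / 18) ^ 2))

lemma g_cont : Continuous g := by unfold g; fun_prop

lemma g_nonneg (x : ℝ) : 0 ≤ g x :=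
  le_min (le_min (sq_nonneg _) (sq_nonneg _)) (le_min (sq_nonneg _) (sq_nonneg _))

lemma g_eq1 {x : ℝ} (h1 : 0 ≤ x) (h2 : x ≤ 1/6) : g x = (x - 1/12)^2 := by
  have hAB : (x-1/12:ℝ)^2 ≤ (x-1/4)^2 := by nlinarith
  have hAC : (x-1/12:ℝ)^2 ≤ (x-13/18)^2 := by nlinarith
  have hAD : (x-1/12:ℝ)^2 ≤ (x-17/18)^2 := by nlinarith
  unfold g
  rw [min_eq_left hAB, min_eq_left (le_min hAC hAD)]

lemma g_eq2 {x : ℝ} (h1 : 1/6 ≤ x) (h2 : x ≤ 1/3) : g x = (x - 1/4)^2 := by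
  have hBA : (x-1/4:ℝ)^2 ≤ (x-1/12)^2 := by nlinarith
  have hBC : (x-1/4:ℝ)^2 ≤ (x-13/18)^2 := by nlinarith
  have hBD : (x-1/4:ℝ)^2 ≤ (x-17/18)^2 := by nlinarith
  unfold g
  rw [min_eq_right hBA, min_eq_left (le_min hBC hBD)]

lemma g_eq3 {x : ℝ} (h1 : 2/3 ≤ x) (h2 : x ≤ 7/9) : g x = (x - 13/18)^2 := by
  have hCD : (x-13/18:ℝ)^2 ≤ (x-17/18)^2 := by nlinarith
  have hCA : (x-13/18:ℝ)^2 ≤ (x-1/12)^2 := by nlinarith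
  have hCB : (x-13/18:ℝ)^2 ≤ (x-1/4)^2 := by nlinarith
  unfold g
  rw [min_eq_left hCD, min_eq_right (le_min hCA hCB)]

lemma g_eq4 {x : ℝ} (h1 : 5/6 ≤ x) : g x = (x - 17/18)^2 := by
  have hDC : (x-17/18:ℝ)^2 ≤ (x-13/18)^2 := by nlinarith
  have hDA : (x-17/18:ℝ)^2 ≤ (x-1/12)^2 := by nlinarith
  have hDB : (x-17/18:ℝ)^2 ≤ (x-1/4)^2 := by nlinarith
  unfold g
  rw [min_eq_right hDC, min_eq_right (le_min hDA hDB)]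

lemma integral_sq (a b c : ℝ) : (∫ x in a..b, (x - c)^2) = ((b-c)^3 - (a-c)^3)/3 := by
  have h := intervalIntegral.integral_comp_sub_right (a := a) (b := b) (fun x => x ^ 2) c
  rw [h, integral_pow]
  norm_num

noncomputable def s (n : ℕ) : ℝ := (3/2)^(n+1) * ∫ x in J (n+1), g x

lemma s0 : s 0 = 1/864 := by
  have hJ : J 1 = Set.Icc (0:ℝ) (1/3) := by unfold J; norm_num
  unfold s
  rw [hJ, MeasureTheory.integral_Icc_eq_integral_Ioc,
    ← intervalIntegral.integral_of_le (by norm_num : (0:ℝ) ≤ 1/3),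
    ← intervalIntegral.integral_add_adjacent_intervals (a := 0) (b := 1/6) (c := 1/3)
      (g_cont.intervalIntegrable _ _) (g_cont.intervalIntegrable _ _),
    intervalIntegral.integral_congr (a := 0) (b := 1/6) (g := fun x => (x - 1/12)^2)
      (by rw [Set.uIcc_of_le (by norm_num)]; exact fun x hx => g_eq1 hx.1 hx.2),
    intervalIntegral.integral_congr (a := 1/6) (b := 1/3) (g := fun x => (x - 1/4)^2)
      (by rw [Set.uIcc_of_le (by norm_num)]; exact fun x hx => g_eq2 hx.1 hx.2),
    integral_sq, integral_sq]
  norm_num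

lemma s1 : s 1 = 1/3888 := by
  have hJ : J 2 = Set.Icc (2/3 : ℝ) (7/9) := by unfold J; norm_num
  unfold s
  rw [hJ, MeasureTheory.integral_Icc_eq_integral_Ioc,
    ← intervalIntegral.integral_of_le (by norm_num : (2/3:ℝ) ≤ 7/9),
    intervalIntegral.integral_congr (g := fun x => (x - 13/18)^2)
      (by rw [Set.uIcc_of_le (by norm_num)]; exact fun x hx => g_eq3 hx.1 hx.2),
    integral_sq]
  norm_num

lemma s_ge2 (n : ℕ) : s (n+2) =
    (1/2592)*(1/2:ℝ)^n - (5/3888)*(1/6:ℝ)^n + (19/17496)*(1/18:ℝ)^n := by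
  have ht : (0:ℝ) < (1/3:ℝ)^n := by positivity
  have ht1 : (1/3:ℝ)^n ≤ 1 := pow_le_one₀ (by norm_num) (by norm_num)
  have e0 : ∀ k : ℕ, ((1:ℝ)/3^(n+k)) = (1/3)^n / 3^k := by
    intro k; rw [pow_add, one_div_pow]; ring
  have ea : (1:ℝ) - 1/3^(n+3-1) = 1 - (1/3)^n/9 := by
    have : n + 3 - 1 = n + 2 := rfl
    rw [this, e0 2]; norm_num
  have eb : (1:ℝ) - 2/3^(n+3) = 1 - 2*(1/3)^n/27 := by
    rw [show (2:ℝ)/3^(n+3) = 2*(1/3^(n+3)) by ring, e0 3]; ring_nf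
  have hab : (1:ℝ) - (1/3)^n/9 ≤ 1 - 2*(1/3)^n/27 := by nlinarith
  have hJ : J (n+3) = Set.Icc (1 - (1/3:ℝ)^n/9) (1 - 2*(1/3:ℝ)^n/27) := by
    unfold J; rw [ea, eb]
  unfold s
  rw [show n + 2 + 1 = n + 3 from rfl, hJ, MeasureTheory.integral_Icc_eq_integral_Ioc,
    ← intervalIntegral.integral_of_le hab,
    intervalIntegral.integral_congr (g := fun x => (x - 17/18)^2)
      (by
        rw [Set.uIcc_of_le hab]
        intro x hx
        have : (5/6:ℝ) ≤ x := by
          have := hx.1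
          nlinarith
        exact g_eq4 this),
    integral_sq]
  have hp : ((3:ℝ)/2)^(n+2+1) = (3/2)^n * (27/8) := by
    rw [show n+2+1 = n+3 from rfl, pow_add]; norm_num
  have hu1 : ((1:ℝ)/2)^n = (3/2)^n * (1/3)^n := by rw [← mul_pow]; norm_num
  have hu2 : ((1:ℝ)/6)^n = (3/2)^n * ((1/3)^n)^2 := by
    rw [← pow_mul, pow_mul', ← mul_pow]; norm_num
  have hu3 : ((1:ℝ)/18)^n = (3/2)^n * ((1/3)^n)^3 := by
    rw [← pow_mul, pow_mul', ← mul_pow]; norm_num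
  rw [hp, hu1, hu2, hu3]
  ring

lemma s_nonneg (n : ℕ) : 0 ≤ s n :=
  mul_nonneg (by positivity) (integral_nonneg g_nonneg)

lemma s_hasSum : HasSum s (79/44064) := by
  have h1 : HasSum (fun n : ℕ => (1/2592)*(1/2:ℝ)^n - (5/3888)*(1/6:ℝ)^n
      + (19/17496)*(1/18:ℝ)^n) (25/66096) := by
    have g1 := (hasSum_geometric_of_lt_one (by norm_num) (by norm_num : (1/2:ℝ) < 1)).mul_left (1/2592)
    have g2 := (hasSum_geometric_of_lt_one (by norm_num) (by norm_num : (1/6:ℝ) < 1)).mul_left (5/3888)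
    have g3 := (hasSum_geometric_of_lt_one (by norm_num) (by norm_num : (1/18:ℝ) < 1)).mul_left (19/17496)
    have := (g1.sub g2).add g3
    convert this using 1
    · rfl
    norm_num
  have h2 : HasSum (fun n : ℕ => s (n+2)) (25/66096) := by
    have hfe : (fun n : ℕ => s (n+2)) = fun n : ℕ => (1/2592)*(1/2:ℝ)^n
        - (5/3888)*(1/6:ℝ)^n + (19/17496)*(1/18:ℝ)^n := funext s_ge2
    rw [hfe]; exact h1
  have h3 := (hasSum_nat_add_iff (f := s) 2).mp h2
  convert h3 using 1
  · rfl
  rw [Finset.sum_range_succ, Finset.sum_range_one, s0, s1]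
  norm_num

lemma J_notmem {m n : ℕ} (h : m < n) {x : ℝ} (hx : x ∈ J (m+1)) : x ∉ J (n+1) := by
  intro hx2
  simp only [J, Nat.add_sub_cancel, Set.mem_Icc] at hx hx2
  have h1 : (1:ℝ)/3^n ≤ 1/3^(m+1) := by
    apply one_div_le_one_div_of_le (by positivity)
    exact pow_le_pow_right₀ (by norm_num) h
  have h2 : (0:ℝ) < 1/3^(m+1) := by positivity
  have e : (2:ℝ)/3^(m+1) = 2*(1/3^(m+1)) := by ring
  linarith [hx.2, hx2.1]

lemma J_unique {m n : ℕ} (h : m ≠ n) {x : ℝ} (hx : x ∈ J (m+1)) : x ∉ J (n+1) := by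
  rcases h.lt_or_gt with h' | h'
  · exact J_notmem h' hx
  · intro hx2; exact J_notmem h' hx2 hx

lemma P_eq : P = Measure.sum
    (fun n => (ENNReal.ofReal (((3:ℝ)/2)^(n+1))) • volume.restrict (J (n+1))) := by
  have hpt : (fun x => ENNReal.ofReal (f x)) =
      ∑' n : ℕ, (J (n+1)).indicator (fun _ => ENNReal.ofReal (((3:ℝ)/2)^(n+1))) := by
    funext x
    rw [tsum_apply (Pi.summable.2 (fun _ => ENNReal.summable))]
    by_cases h : ∃ k, x ∈ J (k+1)
    · obtain ⟨k, hk⟩ := h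
      have hf : f x = (3/2)^(k+1) := by
        rw [f, tsum_eq_single k (fun n hn =>
          Set.indicator_of_notMem (fun hmem => J_unique hn hmem hk) _),
          Set.indicator_of_mem hk]
      rw [hf, tsum_eq_single k (fun n hn =>
          Set.indicator_of_notMem (fun hmem => J_unique hn hmem hk) _),
        Set.indicator_of_mem hk]
    · push_neg at h
      have hf : f x = 0 := by
        rw [f]
        have hz : ∀ n : ℕ, (J (n+1)).indicator (fun _ => ((3:ℝ)/2)^(n+1)) x = 0 :=
          fun n => Set.indicator_of_notMem (h n) _
        simp_rw [hz]; exact tsum_zero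
      have hz2 : ∀ n : ℕ, (J (n+1)).indicator (fun _ => ENNReal.ofReal (((3:ℝ)/2)^(n+1))) x = 0 :=
        fun n => Set.indicator_of_notMem (h n) _
      simp_rw [hf, hz2]
      simp
  have hJm : ∀ n : ℕ, MeasurableSet (J (n+1)) := fun n => by
    unfold J; exact measurableSet_Icc
  rw [P, hpt, withDensity_tsum (fun n => measurable_const.indicator (hJm n))]
  congr 1
  funext n
  rw [withDensity_indicator (hJm n), withDensity_const]

lemma key : (∫ x, g x ∂P) = 79/44064 := by
  rw [integral_eq_lintegral_of_nonneg_ae (Filter.Eventually.of_forall g_nonneg)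
      g_cont.aestronglyMeasurable, P_eq, lintegral_sum_measure]
  have hterm : ∀ n : ℕ, (∫⁻ x, ENNReal.ofReal (g x)
      ∂((ENNReal.ofReal (((3:ℝ)/2)^(n+1))) • volume.restrict (J (n+1)))) =
      ENNReal.ofReal (s n) := by
    intro n
    have hInt : IntegrableOn g (J (n+1)) volume := by
      unfold J; exact g_cont.integrableOn_Icc
    rw [lintegral_smul_measure,
      ← ofReal_integral_eq_lintegral_ofReal hInt (Filter.Eventually.of_forall g_nonneg),
      smul_eq_mul, ← ENNReal.ofReal_mul (by positivity)]
    rfl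
  simp_rw [hterm]
  rw [← ENNReal.ofReal_tsum_of_nonneg s_nonneg s_hasSum.summable, s_hasSum.tsum_eq,
    ENNReal.toReal_ofReal (by norm_num)]

theorem stmt_8 :
    (∫ x, min (min ((x - 1 / 12) ^ 2) ((x - 1 / 4) ^ 2))
        (min ((x - 13 / 18) ^ 2) ((x - 17 / 18) ^ 2)) ∂P) = 79 / 44064 ∧
    sInf {v : ℝ | ∃ a : Fin 4 → ℝ, v = ∫ x, ⨅ i : Fin 4, (x - a i) ^ 2 ∂P} ≤ 79 / 44064 := by
  constructor
  · exact key
  · have h0 : BddBelow {v : ℝ | ∃ a : Fin 4 → ℝ, v = ∫ x, ⨅ i : Fin 4, (x - a i) ^ 2 ∂P} := by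
      refine ⟨0, ?_⟩
      rintro v ⟨b, rfl⟩
      exact integral_nonneg fun x => le_ciInf fun i => sq_nonneg _
    refine csInf_le h0 ⟨![1/12, 1/4, 13/18, 17/18], ?_⟩
    have hint : ∀ x : ℝ,
        (⨅ i : Fin 4, (x - (![1/12, 1/4, 13/18, 17/18] : Fin 4 → ℝ) i)^2) = g x := by
      intro x
      apply le_antisymm
      · have hb : BddBelow (Set.range fun i : Fin 4 =>
            (x - (![1/12, 1/4, 13/18, 17/18] : Fin 4 → ℝ) i)^2) :=
          ⟨0, by rintro y ⟨i, rfl⟩; positivity⟩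
        refine le_min (le_min ?_ ?_) (le_min ?_ ?_)
        · simpa using ciInf_le hb 0
        · simpa using ciInf_le hb 1
        · simpa using ciInf_le hb 2
        · simpa using ciInf_le hb 3
      · refine le_ciInf fun i => ?_
        fin_cases i
        · exact le_trans (min_le_left _ _) (min_le_left _ _)
        · exact le_trans (min_le_left _ _) (min_le_right _ _)
        · exact le_trans (min_le_right _ _) (min_le_left _ _)
        · exact le_trans (min_le_right _ _) (min_le_right _ _)
    simp_rw [hint]
    exact key.symm
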